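/- Let Q, F : (0,∞) → ℝ be invertible, increasing, differentiable functions such that Q ∘ F^{−1} is concave. Then for every a > 0 and every integer n ≥ 1, (1/F′(a)ⁿ) ∫_0^∞ F^{−1}(F(a) − t) t^{n−1} dt ≤ (1/Q′(a)ⁿ) ∫_0^∞ Q^{−1}(Q(a) − t) t^{n−1} dt. -/

import Mathlib

open MeasureTheory Set Filter Pointwise
open scoped ENNReal InnerProductSpace NNReal Topology

noncomputable section

private lemma concave_secant17 {s : Set ℝ} {G : ℝ → ℝ} (h : ConcaveOn ℝ s G) {x y z : ℝ}
    (hx : x ∈ s) (hz : z ∈ s) (hxy : x < y) (hyz : y < z) :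
    (G z - G y) / (z - y) ≤ (G z - G x) / (z - x) := by
  have h3 := h.neg.secant_mono_aux3 hx hz hxy hyz
  simp only [Pi.neg_apply] at h3
  have e1 : (-G z - -G x) / (z - x) = -((G z - G x) / (z - x)) := by ring
  have e2 : (-G z - -G y) / (z - y) = -((G z - G y) / (z - y)) := by ring
  rw [e1, e2] at h3
  linarith

private lemma scale_Ioi17 (c : ℝ) (hc : 0 < c) (f : ℝ → ℝ≥0∞) :
    ∫⁻ t in Set.Ioi (0:ℝ), f t = ENNReal.ofReal c * ∫⁻ s in Set.Ioi (0:ℝ), f (c * s) := by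
  set g : ℝ → ℝ≥0∞ := (Set.Ioi (0:ℝ)).indicator f with hg
  have h1 : ∫⁻ s in Set.Ioi (0:ℝ), f (c * s) = ∫⁻ s, g (c * s) := by
    rw [← lintegral_indicator measurableSet_Ioi]
    refine lintegral_congr fun s => ?_
    by_cases h : s ∈ Set.Ioi (0:ℝ)
    · rw [Set.indicator_of_mem h, hg,
        Set.indicator_of_mem (Set.mem_Ioi.mpr (mul_pos hc h))]
    · rw [Set.indicator_of_notMem h, hg, Set.indicator_of_notMem]
      intro hcs
      exact h (Set.mem_Ioi.mpr (by nlinarith [Set.mem_Ioi.mp hcs]))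
  have h2 : ∫⁻ s, g (c * s) = ENNReal.ofReal c⁻¹ * ∫⁻ y, g y := by
    calc ∫⁻ s, g (c * s)
        = ∫⁻ y, g y ∂(Measure.map (MeasurableEquiv.mulLeft₀ c hc.ne') volume) :=
          (MeasureTheory.lintegral_map_equiv g (MeasurableEquiv.mulLeft₀ c hc.ne')).symm
      _ = ∫⁻ y, g y ∂(ENNReal.ofReal |c⁻¹| • volume) := by
          rw [MeasurableEquiv.coe_mulLeft₀, Real.map_volume_mul_left hc.ne']
      _ = ENNReal.ofReal c⁻¹ * ∫⁻ y, g y := by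
          rw [lintegral_smul_measure, abs_of_pos (inv_pos.mpr hc), smul_eq_mul]
  have h3 : ∫⁻ t in Set.Ioi (0:ℝ), f t = ∫⁻ y, g y := by
    rw [hg, lintegral_indicator measurableSet_Ioi]
  rw [h1, h2, h3, ← mul_assoc, ← ENNReal.ofReal_mul hc.le,
    mul_inv_cancel₀ hc.ne', ENNReal.ofReal_one, one_mul]

private lemma aux_scale17 (c : ℝ) (hc : 0 < c) (φ : ℝ → ℝ) (n : ℕ) (hn : 1 ≤ n) :
    ((ENNReal.ofReal c) ^ n)⁻¹ * ∫⁻ t in Set.Ioi (0:ℝ), ENNReal.ofReal (φ t * t ^ (n-1))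
      = ∫⁻ s in Set.Ioi (0:ℝ), ENNReal.ofReal (φ (c * s) * s ^ (n-1)) := by
  rw [scale_Ioi17 c hc (fun t => ENNReal.ofReal (φ t * t ^ (n-1)))]
  have hpt : ∀ s : ℝ, ENNReal.ofReal (φ (c * s) * (c * s) ^ (n-1))
      = ENNReal.ofReal (c ^ (n-1)) * ENNReal.ofReal (φ (c * s) * s ^ (n-1)) := by
    intro s
    rw [← ENNReal.ofReal_mul (by positivity : (0:ℝ) ≤ c ^ (n-1))]
    congr 1
    rw [mul_pow]
    ring
  simp_rw [hpt]
  rw [lintegral_const_mul' _ _ ENNReal.ofReal_ne_top]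
  have hne : ENNReal.ofReal c ≠ 0 := by
    simp only [ne_eq, ENNReal.ofReal_eq_zero, not_le]
    exact hc
  have hkey : (ENNReal.ofReal c ^ n)⁻¹ * (ENNReal.ofReal c * ENNReal.ofReal (c ^ (n-1))) = 1 := by
    have h1 : ENNReal.ofReal c * ENNReal.ofReal (c ^ (n-1)) = ENNReal.ofReal c ^ n := by
      rw [ENNReal.ofReal_pow hc.le, ← pow_succ', Nat.sub_add_cancel hn]
    rw [h1]
    exact ENNReal.inv_mul_cancel (pow_ne_zero n hne)
      (ENNReal.pow_ne_top ENNReal.ofReal_ne_top)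
  rw [← mul_assoc (ENNReal.ofReal c), ← mul_assoc, hkey, one_mul]

/-- if `Q, F : (0,∞) → ℝ` are invertible, increasing, differentiable and
`Q ∘ F⁻¹` is concave (the inverses `Finv`, `Qinv` being extended by `0` off the ranges of
`F`, `Q`), then for every `a > 0` and `n ≥ 1`,
`(1/F'(a)ⁿ)∫_0^∞ F⁻¹(F(a)−t)t^{n−1}dt ≤ (1/Q'(a)ⁿ)∫_0^∞ Q⁻¹(Q(a)−t)t^{n−1}dt`
(as an inequality of extended nonnegative reals). -/
theorem statement17 (F Finv F' Q Qinv Q' : ℝ → ℝ)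
    (hFmono : StrictMonoOn F (Set.Ioi 0)) (hQmono : StrictMonoOn Q (Set.Ioi 0))
    (hFdiff : ∀ s : ℝ, 0 < s → HasDerivAt F (F' s) s)
    (hQdiff : ∀ s : ℝ, 0 < s → HasDerivAt Q (Q' s) s)
    (hFinv : ∀ s : ℝ, 0 < s → Finv (F s) = s)
    (hQinv : ∀ s : ℝ, 0 < s → Qinv (Q s) = s)
    (hFinv0 : ∀ t : ℝ, t ∉ F '' Set.Ioi 0 → Finv t = 0)
    (hQinv0 : ∀ t : ℝ, t ∉ Q '' Set.Ioi 0 → Qinv t = 0)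
    (hconc : ConcaveOn ℝ (F '' Set.Ioi 0) fun t => Q (Finv t))
    (a : ℝ) (ha : 0 < a) (n : ℕ) (hn : 1 ≤ n) :
    ((ENNReal.ofReal (F' a)) ^ n)⁻¹ *
        ∫⁻ t in Set.Ioi (0 : ℝ), ENNReal.ofReal (Finv (F a - t) * t ^ (n - 1)) ≤
      ((ENNReal.ofReal (Q' a)) ^ n)⁻¹ *
        ∫⁻ t in Set.Ioi (0 : ℝ), ENNReal.ofReal (Qinv (Q a - t) * t ^ (n - 1)) := by
  have hQinv_nonneg : ∀ x : ℝ, 0 ≤ Qinv x := by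
    intro x
    by_cases hx : x ∈ Q '' Set.Ioi 0
    · obtain ⟨b, hb, rfl⟩ := hx
      rw [hQinv b hb]
      exact (Set.mem_Ioi.mp hb).le
    · rw [hQinv0 x hx]
  by_cases hcQ : 0 < Q' a
  · -- main case
    -- secant comparison from concavity
    have secant_le : ∀ b ∈ Set.Ioo (0:ℝ) a, ∀ b' ∈ Set.Ioo b a,
        (Q a - Q b') / (F a - F b') ≤ (Q a - Q b) / (F a - F b) := by
      intro b hb b' hb'
      have hb0 : (0:ℝ) < b := hb.1
      have hb'0 : (0:ℝ) < b' := lt_trans hb0 hb'.1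
      have hFbb' : F b < F b' := hFmono (Set.mem_Ioi.mpr hb0) (Set.mem_Ioi.mpr hb'0) hb'.1
      have hFb'a : F b' < F a := hFmono (Set.mem_Ioi.mpr hb'0) (Set.mem_Ioi.mpr ha) hb'.2
      have h := concave_secant17 hconc (Set.mem_image_of_mem F (Set.mem_Ioi.mpr hb0))
        (Set.mem_image_of_mem F (Set.mem_Ioi.mpr ha)) hFbb' hFb'a
      simpa only [hFinv a ha, hFinv b hb0, hFinv b' hb'0] using h
    -- slope limits
    have slopeF : Tendsto (slope F a) (𝓝[<] a) (𝓝 (F' a)) :=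
      (hasDerivAt_iff_tendsto_slope.mp (hFdiff a ha)).mono_left
        (nhdsWithin_mono a (fun x hx => by simpa using ne_of_lt hx))
    have slopeQ : Tendsto (slope Q a) (𝓝[<] a) (𝓝 (Q' a)) :=
      (hasDerivAt_iff_tendsto_slope.mp (hQdiff a ha)).mono_left
        (nhdsWithin_mono a (fun x hx => by simpa using ne_of_lt hx))
    have ratio_eq : ∀ b ∈ Set.Ioo (0:ℝ) a,
        slope Q a b / slope F a b = (Q a - Q b) / (F a - F b) := by
      intro b hb
      have hb0 : (0:ℝ) < b := hb.1
      have hba : b < a := hb.2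
      have hF : F b < F a := hFmono (Set.mem_Ioi.mpr hb0) (Set.mem_Ioi.mpr ha) hba
      have hFne : F b - F a ≠ 0 := sub_ne_zero.mpr (ne_of_lt hF)
      have hFne' : F a - F b ≠ 0 := sub_ne_zero.mpr (ne_of_gt hF)
      have hbne : b - a ≠ 0 := sub_ne_zero.mpr (ne_of_lt hba)
      rw [slope_def_field, slope_def_field]
      field_simp
      ring
    -- F' a > 0
    have hcF : 0 < F' a := by
      rcases lt_or_ge 0 (F' a) with h | h
      · exact h
      exfalso
      have hsFpos : ∀ᶠ b in 𝓝[<] a, 0 < slope F a b := by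
        filter_upwards [Ioo_mem_nhdsLT_of_mem ⟨ha, le_refl a⟩] with b hb
        rw [slope_def_field]
        refine div_pos_iff.mpr (Or.inr ⟨?_, ?_⟩)
        · exact sub_neg.mpr (hFmono (Set.mem_Ioi.mpr hb.1) (Set.mem_Ioi.mpr ha) hb.2)
        · exact sub_neg.mpr hb.2
      have hF0 : F' a = 0 :=
        le_antisymm h (ge_of_tendsto slopeF (hsFpos.mono fun b hb => hb.le))
      have hslopeF0 : Tendsto (slope F a) (𝓝[<] a) (𝓝[>] 0) :=
        tendsto_nhdsWithin_of_tendsto_nhds_of_eventually_within _ (hF0 ▸ slopeF) hsFpos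
      have hinv : Tendsto (fun b => (slope F a b)⁻¹) (𝓝[<] a) atTop :=
        tendsto_inv_nhdsGT_zero.comp hslopeF0
      have htop : Tendsto (fun b => slope Q a b * (slope F a b)⁻¹) (𝓝[<] a) atTop :=
        slopeQ.pos_mul_atTop hcQ hinv
      set S0 := (Q a - Q (a/2)) / (F a - F (a/2)) with hS0
      have hbound : ∀ᶠ b in 𝓝[<] a, slope Q a b * (slope F a b)⁻¹ ≤ S0 := by
        filter_upwards [Ioo_mem_nhdsLT_of_mem ⟨half_lt_self ha, le_refl a⟩] with b hb
        have hbmem : b ∈ Set.Ioo (0:ℝ) a := ⟨lt_trans (half_pos ha) hb.1, hb.2⟩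
        rw [← div_eq_mul_inv, ratio_eq b hbmem]
        exact secant_le (a/2) ⟨half_pos ha, half_lt_self ha⟩ b hb
      obtain ⟨b, hgt, hle⟩ := ((htop.eventually_gt_atTop S0).and hbound).exists
      exact absurd hle (not_le.mpr hgt)
    -- limit of chord ratios
    have tend : Tendsto (fun b => (Q a - Q b) / (F a - F b)) (𝓝[<] a) (𝓝 (Q' a / F' a)) := by
      refine (slopeQ.div slopeF hcF.ne').congr' ?_
      filter_upwards [Ioo_mem_nhdsLT_of_mem ⟨ha, le_refl a⟩] with b hb
      exact ratio_eq b hb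
    -- key pointwise inequality
    have key : ∀ s ∈ Set.Ioi (0:ℝ), Finv (F a - F' a * s) ≤ Qinv (Q a - Q' a * s) := by
      intro s hs
      have hs0 : (0:ℝ) < s := Set.mem_Ioi.mp hs
      by_cases hy : F a - F' a * s ∈ F '' Set.Ioi 0
      swap
      · rw [hFinv0 _ hy]; exact hQinv_nonneg _
      obtain ⟨b, hb, hFb⟩ := hy
      have hb0 : (0:ℝ) < b := Set.mem_Ioi.mp hb
      rw [← hFb, hFinv b hb0]
      have hba : b < a := by
        by_contra hc
        push_neg at hc
        have : F a ≤ F b := hFmono.monotoneOn (Set.mem_Ioi.mpr ha) (Set.mem_Ioi.mpr hb0) hc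
        nlinarith [mul_pos hcF hs0]
      have hslope : Q' a / F' a ≤ (Q a - Q b) / (F a - F b) := by
        refine le_of_tendsto tend ?_
        filter_upwards [Ioo_mem_nhdsLT_of_mem ⟨hba, le_refl a⟩] with b' hb'
        exact secant_le b ⟨hb0, hba⟩ b' hb'
      have hFab : F a - F b = F' a * s := by linarith [hFb]
      have hQb : Q b ≤ Q a - Q' a * s := by
        have hpos : 0 < F a - F b := by rw [hFab]; exact mul_pos hcF hs0
        have h1 : Q' a / F' a * (F a - F b) ≤ Q a - Q b := (le_div_iff₀ hpos).mp hslope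
        rw [hFab] at h1
        have h2 : Q' a / F' a * (F' a * s) = Q' a * s := by field_simp
        linarith
      have hmem : Q a - Q' a * s ∈ Set.Icc (Q b) (Q a) :=
        ⟨hQb, by nlinarith [mul_pos hcQ hs0]⟩
      have hcont : ContinuousOn Q (Set.Icc b a) := fun x hx =>
        ((hQdiff x (lt_of_lt_of_le hb0 hx.1)).continuousAt).continuousWithinAt
      obtain ⟨c, hc, hQc⟩ := intermediate_value_Icc hba.le hcont hmem
      have hc0 : 0 < c := lt_of_lt_of_le hb0 hc.1
      rw [← hQc, hQinv c hc0]
      exact hc.1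
    -- scaling both sides
    have hF := aux_scale17 (F' a) hcF (fun t => Finv (F a - t)) n hn
    have hQ := aux_scale17 (Q' a) hcQ (fun t => Qinv (Q a - t)) n hn
    rw [hF, hQ]
    refine lintegral_mono_ae ?_
    rw [ae_restrict_iff' measurableSet_Ioi]
    refine Filter.Eventually.of_forall fun s hs => ?_
    refine ENNReal.ofReal_le_ofReal ?_
    exact mul_le_mul_of_nonneg_right (key s hs)
      (pow_nonneg (Set.mem_Ioi.mp hs).le _)
  · -- degenerate case: RHS is ∞
    have h0 : ENNReal.ofReal (Q' a) = 0 := ENNReal.ofReal_eq_zero.mpr (not_lt.mp hcQ)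
    set eps := Q a - Q (a/2) with heps
    have heps0 : 0 < eps := sub_pos.mpr
      (hQmono (Set.mem_Ioi.mpr (half_pos ha)) (Set.mem_Ioi.mpr ha) (half_lt_self ha))
    have hlow : ∀ t ∈ Set.Ioo (eps/2) eps,
        ENNReal.ofReal (a/2 * (eps/2) ^ (n-1))
          ≤ ENNReal.ofReal (Qinv (Q a - t) * t ^ (n-1)) := by
      intro t ht
      have ht0 : 0 < t := lt_trans (half_pos heps0) ht.1
      have hmem : Q a - t ∈ Set.Icc (Q (a/2)) (Q a) := by
        constructor
        · have := ht.2
          rw [heps] at this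
          linarith
        · linarith
      have hcont : ContinuousOn Q (Set.Icc (a/2) a) := fun x hx =>
        ((hQdiff x (lt_of_lt_of_le (half_pos ha) hx.1)).continuousAt).continuousWithinAt
      obtain ⟨c, hc, hQc⟩ := intermediate_value_Icc (half_lt_self ha).le hcont hmem
      have hc0 : 0 < c := lt_of_lt_of_le (half_pos ha) hc.1
      refine ENNReal.ofReal_le_ofReal ?_
      rw [← hQc, hQinv c hc0]
      have h2 : (eps/2) ^ (n-1) ≤ t ^ (n-1) :=
        pow_le_pow_left₀ (half_pos heps0).le ht.1.le _
      have ha2 : a/2 ≤ c := hc.1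
      have := mul_le_mul ha2 h2 (by positivity) (le_trans (half_pos ha).le ha2)
      linarith
    have hIlow : ENNReal.ofReal (a/2 * (eps/2) ^ (n-1)) * volume (Set.Ioo (eps/2) eps)
        ≤ ∫⁻ t in Set.Ioi (0:ℝ), ENNReal.ofReal (Qinv (Q a - t) * t ^ (n-1)) := by
      calc ENNReal.ofReal (a/2 * (eps/2) ^ (n-1)) * volume (Set.Ioo (eps/2) eps)
          = ∫⁻ _ in Set.Ioo (eps/2) eps, ENNReal.ofReal (a/2 * (eps/2) ^ (n-1)) :=
            (setLIntegral_const _ _).symm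
        _ ≤ ∫⁻ t in Set.Ioo (eps/2) eps, ENNReal.ofReal (Qinv (Q a - t) * t ^ (n-1)) :=
            lintegral_mono_ae ((ae_restrict_iff' measurableSet_Ioo).mpr
              (Filter.Eventually.of_forall hlow))
        _ ≤ ∫⁻ t in Set.Ioi (0:ℝ), ENNReal.ofReal (Qinv (Q a - t) * t ^ (n-1)) :=
            lintegral_mono_set (fun t ht => lt_trans (half_pos heps0) ht.1)
    have hconst : ENNReal.ofReal (a/2 * (eps/2) ^ (n-1)) ≠ 0 := by
      simp only [ne_eq, ENNReal.ofReal_eq_zero, not_le]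
      positivity
    have hvol : volume (Set.Ioo (eps/2) eps) ≠ 0 := by
      have : (0:ℝ≥0∞) < volume (Set.Ioo (eps/2) eps) := by
        rw [Real.volume_Ioo]
        exact ENNReal.ofReal_pos.mpr (sub_pos.mpr (half_lt_self heps0))
      exact this.ne'
    have hIne : (∫⁻ t in Set.Ioi (0:ℝ), ENNReal.ofReal (Qinv (Q a - t) * t ^ (n-1))) ≠ 0 :=
      fun h => (mul_ne_zero hconst hvol) (le_antisymm (h ▸ hIlow) bot_le)
    rw [h0, zero_pow (Nat.one_le_iff_ne_zero.mp hn), ENNReal.inv_zero,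
      ENNReal.top_mul hIne]
    exact le_top
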